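/- Let F be a field of characteristic zero and E/F a finite Galois extension of degree k with Galois group Gal(E/F) = {σ₁, …, σ_k}, σ₁ = id. Let w ∈ E be a normal element of E/F, and let α₁, …, α_k ∈ E satisfy: ∑_{i=1}^{k} αᵢ · σᵢ(w) = ∑_{i=1}^{k} σᵢ(w) and ∑_{i=1}^{k} αᵢ · σᵢ(σⱼ(w)) = w − σⱼ(w) for 2 ≤ j ≤ k. In the F-algebra End_F(E) of F-linear endomorphisms of E, let Ê := (1/k) · ∑_{i=1}^{k} σᵢ and let A := ∑_{i=1}^{k} (multiplication by αᵢ) ∘ σᵢ (which is invertible). Then the family eᵢ := σᵢ⁻¹ ∘ A⁻¹ ∘ Ê ∘ A ∘ σᵢ, for 1 ≤ i ≤ k, is a complete set of orthogonal primitive idempotents of End_F(E): each eᵢ is a nonzero idempotent, eᵢ ∘ eⱼ = 0 for i ≠ j, ∑_{i=1}^{k} eᵢ = id, and no eᵢ can be written as e' + e'' with e', e'' nonzero idempotents of End_F(E) satisfying e' ∘ e'' = 0. -/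

import Mathlib

/-- With `E/F` a finite Galois extension of characteristic-zero fields
of degree `k`, Galois group enumerated as `σ 0 = id, …, σ (k-1)`, `w` a normal element,
and `α` a solution of the linear system of Statement 2, set (in the `F`-algebra
`Module.End F E`) `Ê = (1/k) ∑ i, σ i` and `A = ∑ i (mul by α i) ∘ σ i` (which is
invertible).  Then the family `e i = σ i⁻¹ ∘ A⁻¹ ∘ Ê ∘ A ∘ σ i` is a complete set of
orthogonal primitive idempotents of `Module.End F E`. -/
theorem stmt3 {F E : Type*} [Field F] [Field E] [Algebra F E] [CharZero F]
    [FiniteDimensional F E] [IsGalois F E] {k : ℕ} [NeZero k]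
    (hk : Module.finrank F E = k)
    (σ : Fin k → (E ≃ₐ[F] E)) (hσ : Function.Bijective σ) (hσ0 : σ 0 = 1)
    (w : E)
    (hli : LinearIndependent F (fun i : Fin k => σ i w))
    (hspan : Submodule.span F (Set.range fun i : Fin k => σ i w) = ⊤)
    (α : Fin k → E)
    (hα : (∑ i, α i * σ i w = ∑ i, σ i w) ∧
      ∀ j : Fin k, j ≠ 0 → ∑ i, α i * σ i (σ j w) = w - σ j w)
    (Ehat A : Module.End F E)
    (hEhat : Ehat = (k : F)⁻¹ • ∑ i, ((σ i).toLinearMap : Module.End F E))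
    (hA : A = ∑ i, (LinearMap.mulLeft F (α i) : Module.End F E) * (σ i).toLinearMap)
    (e : Fin k → Module.End F E)
    (he : ∀ i, e i = (((σ i)⁻¹ : E ≃ₐ[F] E).toLinearMap : Module.End F E) *
        Ring.inverse A * Ehat * A * (σ i).toLinearMap) :
    IsUnit A ∧
    (∀ i, e i ≠ 0 ∧ IsIdempotentElem (e i)) ∧
    (∀ i j, i ≠ j → e i * e j = 0) ∧
    (∑ i, e i = 1) ∧
    (∀ i, ¬ ∃ e' e'' : Module.End F E, e' ≠ 0 ∧ e'' ≠ 0 ∧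
      IsIdempotentElem e' ∧ IsIdempotentElem e'' ∧ e' * e'' = 0 ∧ e i = e' + e'') := by
  classical
  have hkF : (k : F) ≠ 0 := Nat.cast_ne_zero.mpr (NeZero.ne k)
  have hw0 : w ≠ 0 := by
    have := hli.ne_zero 0
    simpa [hσ0] using this
  set σe : Fin k ≃ (E ≃ₐ[F] E) := Equiv.ofBijective σ hσ with hσedef
  have hσe_apply : ∀ i, σe i = σ i := fun i => rfl
  -- reindexing lemmas
  have hreR : ∀ (τ : E ≃ₐ[F] E) (x : E), (∑ i, σ i (τ x)) = ∑ i, σ i x := by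
    intro τ x
    have hb : Function.Bijective (fun i => σe.symm (σ i * τ)) := by
      have : (fun i => σe.symm (σ i * τ))
          = fun i => σe.symm ((Equiv.mulRight τ) (σe i)) := rfl
      rw [this]
      exact σe.symm.bijective.comp ((Equiv.mulRight τ).bijective.comp σe.bijective)
    refine Fintype.sum_bijective _ hb _ _ ?_
    intro i
    have h1 : σ (σe.symm (σ i * τ)) = σ i * τ := σe.apply_symm_apply (σ i * τ)
    rw [h1, AlgEquiv.mul_apply]
  have hreL : ∀ (τ : E ≃ₐ[F] E) (x : E), (∑ i, τ (σ i x)) = ∑ i, σ i x := by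
    intro τ x
    have hb : Function.Bijective (fun i => σe.symm (τ * σ i)) := by
      have : (fun i => σe.symm (τ * σ i))
          = fun i => σe.symm ((Equiv.mulLeft τ) (σe i)) := rfl
      rw [this]
      exact σe.symm.bijective.comp ((Equiv.mulLeft τ).bijective.comp σe.bijective)
    refine Fintype.sum_bijective _ hb _ _ ?_
    intro i
    have h1 : σ (σe.symm (τ * σ i)) = τ * σ i := σe.apply_symm_apply (τ * σ i)
    rw [h1, AlgEquiv.mul_apply]
  set c : E := ∑ i, σ i w with hc
  have hfixc : ∀ τ : E ≃ₐ[F] E, τ c = c := by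
    intro τ
    rw [hc, map_sum]
    exact hreL τ w
  have hfix2F : ∀ z : E, (∀ τ : E ≃ₐ[F] E, τ z = z) → ∃ f : F, algebraMap F E f = z := by
    intro z hz
    have hmem : z ∈ (⊥ : IntermediateField F E) := by
      rw [← IsGalois.fixedField_fixingSubgroup (⊥ : IntermediateField F E)]
      intro g
      exact hz g
    rwa [IntermediateField.mem_bot] at hmem
  have hEhat_apply : ∀ x, Ehat x = (k : F)⁻¹ • ∑ i, σ i x := by
    intro x
    rw [hEhat]
    simp [LinearMap.sum_apply]
  have hEhat_fix : ∀ z, (∀ τ : E ≃ₐ[F] E, τ z = z) → Ehat z = z := by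
    intro z hz
    rw [hEhat_apply]
    rw [Finset.sum_congr rfl (fun i _ => hz (σ i)), Finset.sum_const, Finset.card_univ,
      Fintype.card_fin, ← Nat.cast_smul_eq_nsmul F, smul_smul, inv_mul_cancel₀ hkF, one_smul]
  have hEhat_out_fix : ∀ (x : E) (τ : E ≃ₐ[F] E), τ (Ehat x) = Ehat x := by
    intro x τ
    rw [hEhat_apply, map_smul, map_sum, hreL τ x]
  have hA_apply : ∀ x, A x = ∑ i, α i * σ i x := by
    intro x
    rw [hA]
    simp [LinearMap.sum_apply, Module.End.mul_apply, LinearMap.mulLeft_apply]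
  have hσ0w : σ 0 w = w := by rw [hσ0]; rfl
  have hAw : A w = c := by rw [hA_apply]; exact hα.1
  have hEA : ∀ j, Ehat (A (σ j w)) = if j = 0 then c else 0 := by
    intro j
    by_cases hj : j = 0
    · subst hj
      rw [if_pos rfl, hσ0w, hAw, hEhat_fix c hfixc]
    · rw [if_neg hj, hA_apply, hα.2 j hj, hEhat_apply]
      have h1 : ∀ i : Fin k, σ i (w - σ j w) = σ i w - σ i (σ j w) := fun i => map_sub _ _ _
      rw [Finset.sum_congr rfl (fun i _ => h1 i), Finset.sum_sub_distrib, hreR (σ j) w,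
        sub_self, smul_zero]
  have hc0 : c ≠ 0 := by
    intro h
    have h1 : ∑ i : Fin k, (1 : F) • σ i w = 0 := by
      simpa using h
    have := Fintype.linearIndependent_iff.mp hli (fun _ => 1) h1 0
    exact one_ne_zero this
  obtain ⟨cF, hcF⟩ := hfix2F c hfixc
  have hcF0 : cF ≠ 0 := fun h => hc0 (by rw [← hcF, h, map_zero])
  -- invertibility of A
  have hAc : A c = (k : F) • w := by
    have hterm : ∀ j : Fin k, A (σ j w) = if j = 0 then c else w - σ j w := by
      intro j
      by_cases hj : j = 0
      · subst hj; rw [if_pos rfl, hσ0w, hAw]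
      · rw [if_neg hj, hA_apply]; exact hα.2 j hj
    have hsum0 : ∑ j ∈ Finset.univ.erase (0 : Fin k), σ j w = c - w := by
      have h2 : σ 0 w + ∑ j ∈ Finset.univ.erase (0 : Fin k), σ j w = ∑ j, σ j w :=
        Finset.add_sum_erase Finset.univ (fun j : Fin k => σ j w) (Finset.mem_univ 0)
      rw [hσ0w, add_comm] at h2
      exact eq_sub_of_add_eq h2
    have hcard : (Finset.univ.erase (0 : Fin k)).card = k - 1 := by
      rw [Finset.card_erase_of_mem (Finset.mem_univ 0), Finset.card_univ, Fintype.card_fin]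
    calc A c = ∑ j, A (σ j w) := by rw [hc, map_sum]
      _ = ∑ j, (if j = 0 then c else w - σ j w) :=
          Finset.sum_congr rfl fun j _ => hterm j
      _ = (if (0 : Fin k) = 0 then c else w - σ 0 w)
            + ∑ j ∈ Finset.univ.erase 0, (if j = 0 then c else w - σ j w) :=
          (Finset.add_sum_erase _ _ (Finset.mem_univ 0)).symm
      _ = c + ∑ j ∈ Finset.univ.erase 0, (w - σ j w) := by
          rw [if_pos rfl]
          congr 1
          refine Finset.sum_congr rfl fun j hj => ?_
          rw [if_neg (Finset.ne_of_mem_erase hj)]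
      _ = c + ((k - 1) • w - (c - w)) := by
          rw [Finset.sum_sub_distrib, hsum0, Finset.sum_const, hcard]
      _ = (k - 1) • w + w := by abel
      _ = ((k - 1) + 1) • w := by rw [add_nsmul, one_nsmul]
      _ = k • w := by rw [Nat.sub_add_cancel (Nat.one_le_iff_ne_zero.mpr (NeZero.ne k))]
      _ = (k : F) • w := (Nat.cast_smul_eq_nsmul F k w).symm
  have hrangeA : ∀ j, σ j w ∈ LinearMap.range A := by
    have hcmem : c ∈ LinearMap.range A := ⟨w, hAw⟩
    have hwmem : w ∈ LinearMap.range A := by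
      refine ⟨(k : F)⁻¹ • c, ?_⟩
      rw [map_smul, hAc, smul_smul, inv_mul_cancel₀ hkF, one_smul]
    intro j
    by_cases hj : j = 0
    · subst hj; rwa [hσ0w]
    · have hAj : A (σ j w) = w - σ j w := by rw [hA_apply]; exact hα.2 j hj
      have h3 : σ j w = w - A (σ j w) := by rw [hAj]; abel
      rw [h3]
      exact Submodule.sub_mem _ hwmem ⟨σ j w, rfl⟩
  have hAsurj : Function.Surjective A := by
    rw [← LinearMap.range_eq_top, ← top_le_iff, ← hspan, Submodule.span_le]
    rintro x ⟨j, rfl⟩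
    exact hrangeA j
  have hAbij : Function.Bijective A :=
    ⟨LinearMap.injective_iff_surjective.mpr hAsurj, hAsurj⟩
  have hAunit : IsUnit A := (Module.End.isUnit_iff A).mpr hAbij
  set B := Ring.inverse A with hBdef
  have hAB : ∀ x, A (B x) = x := by
    intro x
    have h1 : A * B = 1 := Ring.mul_inverse_cancel A hAunit
    calc A (B x) = (A * B) x := rfl
      _ = x := by rw [h1]; rfl
  have hB1 : B 1 = cF⁻¹ • w := by
    apply hAbij.1
    rw [hAB, map_smul, hAw, ← hcF, Algebra.smul_def, ← map_mul, inv_mul_cancel₀ hcF0, map_one]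
  have he_apply : ∀ i x, e i x = ((σ i)⁻¹ : E ≃ₐ[F] E) (B (Ehat (A (σ i x)))) := by
    intro i x
    rw [he i]
    rfl
  have hinvw : ∀ (i : Fin k) (x : E), σ i (((σ i)⁻¹ : E ≃ₐ[F] E) x) = x := by
    intro i x
    have h1 : σ i * (σ i)⁻¹ = 1 := mul_inv_cancel (σ i)
    calc σ i (((σ i)⁻¹ : E ≃ₐ[F] E) x) = (σ i * (σ i)⁻¹) x := (AlgEquiv.mul_apply _ _ _).symm
      _ = x := by rw [h1]; rfl
  have hgen : ∀ (i : Fin k) (x : E), ∃ g : F, e i x = g • ((σ i)⁻¹ : E ≃ₐ[F] E) w := by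
    intro i x
    obtain ⟨f, hf⟩ := hfix2F (Ehat (A (σ i x))) (hEhat_out_fix _)
    refine ⟨f * cF⁻¹, ?_⟩
    rw [he_apply, ← hf, Algebra.algebraMap_eq_smul_one, map_smul, hB1, map_smul, map_smul,
      smul_smul]
  have hezero : ∀ (i j : Fin k), i ≠ j → e i (((σ j)⁻¹ : E ≃ₐ[F] E) w) = 0 := by
    intro i j hij
    set l : Fin k := σe.symm (σ i * (σ j)⁻¹) with hl
    have hσl : σ l = σ i * (σ j)⁻¹ := σe.apply_symm_apply _
    have hl0 : l ≠ 0 := by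
      intro h
      apply hij
      have h1 : σ i * (σ j)⁻¹ = 1 := by rw [← hσl, h, hσ0]
      exact hσ.1 (mul_inv_eq_one.mp h1)
    have hx : σ i (((σ j)⁻¹ : E ≃ₐ[F] E) w) = σ l w := by
      rw [hσl, AlgEquiv.mul_apply]
    rw [he_apply, hx, hEA l, if_neg hl0, map_zero, map_zero]
  have hfixpt : ∀ i, e i (((σ i)⁻¹ : E ≃ₐ[F] E) w) = ((σ i)⁻¹ : E ≃ₐ[F] E) w := by
    intro i
    rw [he_apply, hinvw, hAw, hEhat_fix c hfixc, ← hcF, Algebra.algebraMap_eq_smul_one,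
      map_smul, hB1, smul_smul, mul_inv_cancel₀ hcF0, one_smul]
  have hidem : ∀ i, IsIdempotentElem (e i) := by
    intro i
    apply LinearMap.ext
    intro x
    obtain ⟨g, hg⟩ := hgen i x
    rw [Module.End.mul_apply, hg, map_smul, hfixpt i, ← hg]
  have hne : ∀ i, e i ≠ 0 := by
    intro i h
    have h1 := hfixpt i
    rw [h, LinearMap.zero_apply] at h1
    apply hw0
    have h2 := congrArg (σ i) h1.symm
    rwa [hinvw, map_zero] at h2
  have horth : ∀ i j, i ≠ j → e i * e j = 0 := by
    intro i j hij
    apply LinearMap.ext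
    intro x
    obtain ⟨g, hg⟩ := hgen j x
    rw [Module.End.mul_apply, hg, map_smul, hezero i j hij, smul_zero, LinearMap.zero_apply]
  -- sum equals one
  have hsum : ∑ i, e i = 1 := by
    set p : Module.End F E := ∑ i, e i with hp
    have hpe : ∀ i, e i * p = e i := by
      intro i
      rw [hp, Finset.mul_sum]
      rw [Finset.sum_eq_single i (fun j _ hji => horth i j (Ne.symm hji))
        (fun h => absurd (Finset.mem_univ i) h)]
      exact hidem i
    have hpinj : ∀ x, p x = 0 → x = 0 := by
      intro x hx
      have hex : ∀ i, Ehat (A (σ i x)) = 0 := by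
        intro i
        have h1 : e i x = 0 := by
          have h2 := congrArg (fun f : Module.End F E => f x) (hpe i)
          simp only [Module.End.mul_apply] at h2
          rw [hx, map_zero] at h2
          exact h2.symm
        rw [he_apply] at h1
        have h3 : B (Ehat (A (σ i x))) = 0 := by
          have h4 := congrArg (σ i) h1
          rwa [hinvw, map_zero] at h4
        have h5 := congrArg A h3
        rwa [hAB, map_zero] at h5
      set b : Module.Basis (Fin k) F E := Module.Basis.mk hli (by rw [hspan]) with hb
      have hbe : ∀ j, b j = σ j w := fun j => by rw [hb, Module.Basis.mk_apply]
      have hxr : x = ∑ j, b.repr x j • σ j w := by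
        conv_lhs => rw [← b.sum_repr x]
        exact Finset.sum_congr rfl fun j _ => by rw [hbe]
      have hcoef : ∀ i : Fin k, b.repr x (σe.symm ((σ i)⁻¹)) = 0 := by
        intro i
        have hterm : ∀ j, Ehat (A (σ i (σ j w)))
            = if j = σe.symm ((σ i)⁻¹) then c else 0 := by
          intro j
          have h4 : σ (σe.symm (σ i * σ j)) = σ i * σ j := σe.apply_symm_apply _
          have h5 : σ i (σ j w) = σ (σe.symm (σ i * σ j)) w := by
            rw [h4, AlgEquiv.mul_apply]
          rw [h5, hEA]
          by_cases hj : j = σe.symm ((σ i)⁻¹)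
          · rw [if_pos hj, if_pos]
            subst hj
            have h6 : σ (σe.symm ((σ i)⁻¹)) = (σ i)⁻¹ := σe.apply_symm_apply _
            rw [h6, mul_inv_cancel]
            rw [← hσ0]
            exact σe.symm_apply_apply 0
          · rw [if_neg hj, if_neg]
            intro h0
            apply hj
            have h7 : σ i * σ j = σ 0 := by
              rw [← h4]
              exact congrArg σ h0
            rw [hσ0] at h7
            have h8 : σ j = (σ i)⁻¹ := eq_inv_of_mul_eq_one_right h7
            rw [← h8]
            exact (σe.symm_apply_apply j).symm
        have h9 : Ehat (A (σ i x)) = b.repr x (σe.symm ((σ i)⁻¹)) • c := by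
          conv_lhs => rw [hxr]
          rw [map_sum, map_sum, map_sum]
          have h10 : ∀ j : Fin k, Ehat (A (σ i (b.repr x j • σ j w)))
              = if j = σe.symm ((σ i)⁻¹) then b.repr x j • c else 0 := by
            intro j
            rw [map_smul, map_smul, map_smul, hterm j]
            by_cases hj : j = σe.symm ((σ i)⁻¹)
            · rw [if_pos hj, if_pos hj]
            · rw [if_neg hj, if_neg hj, smul_zero]
          rw [Finset.sum_congr rfl fun j _ => h10 j]
          rw [Finset.sum_ite_eq' Finset.univ (σe.symm ((σ i)⁻¹))
            (fun j => b.repr x j • c)]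
          rw [if_pos (Finset.mem_univ _)]
        rw [hex i] at h9
        rcases smul_eq_zero.mp h9.symm with h | h
        · exact h
        · exact absurd h hc0
      have hall : ∀ j, b.repr x j = 0 := by
        intro j
        have h11 := hcoef (σe.symm ((σ j)⁻¹))
        have h12 : σ (σe.symm ((σ j)⁻¹)) = (σ j)⁻¹ := σe.apply_symm_apply _
        rw [h12, inv_inv] at h11
        rwa [show σe.symm (σ j) = j from σe.symm_apply_apply j] at h11
      rw [hxr]
      rw [Finset.sum_congr rfl fun j _ => by rw [hall j, zero_smul]]
      exact Finset.sum_const_zero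
    have hpp : p * p = p := by
      conv_lhs => rw [hp, Finset.sum_mul]
      rw [Finset.sum_congr rfl fun i _ => hpe i, ← hp]
    apply LinearMap.ext
    intro x
    have h6 : p (p x - x) = 0 := by
      rw [map_sub]
      have h7 := congrArg (fun f : Module.End F E => f x) hpp
      simp only [Module.End.mul_apply] at h7
      rw [h7, sub_self]
    have h8 := hpinj _ h6
    rw [sub_eq_zero] at h8
    simpa using h8
  -- primitivity
  refine ⟨hAunit, fun i => ⟨hne i, hidem i⟩, horth, hsum, ?_⟩
  rintro i ⟨e', e'', h1, h2, h3, h4, h5, h6⟩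
  have h7 : e'' * e' = 0 := by
    have h8 : (e' + e'') * (e' + e'') = e' + e'' := by
      rw [← h6]; exact hidem i
    rw [add_mul, mul_add, mul_add, h3.eq, h4.eq, h5, add_zero] at h8
    have h9 := add_left_cancel h8
    exact add_eq_right.mp h9
  set v : E := ((σ i)⁻¹ : E ≃ₐ[F] E) w with hv
  have hvne : v ≠ 0 := by
    intro h
    apply hw0
    have := congrArg (σ i) h
    rwa [hinvw, map_zero] at this
  have hrangei : LinearMap.range (e i) ≤ Submodule.span F {v} := by
    rintro y ⟨x, rfl⟩
    obtain ⟨g, hg⟩ := hgen i x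
    rw [hg]
    exact Submodule.smul_mem _ _ (Submodule.mem_span_singleton_self v)
  have hr' : LinearMap.range e' ≤ LinearMap.range (e i) := by
    rintro y ⟨x, rfl⟩
    refine ⟨e' x, ?_⟩
    have h10 : e i * e' = e' := by rw [h6, add_mul, h3.eq, h7, add_zero]
    exact congrArg (fun f : Module.End F E => f x) h10
  have hr'' : LinearMap.range e'' ≤ LinearMap.range (e i) := by
    rintro y ⟨x, rfl⟩
    refine ⟨e'' x, ?_⟩
    have h10 : e i * e'' = e'' := by rw [h6, add_mul, h5, h4.eq, zero_add]
    exact congrArg (fun f : Module.End F E => f x) h10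
  have hdisj : LinearMap.range e' ⊓ LinearMap.range e'' = ⊥ := by
    rw [eq_bot_iff]
    intro y hy
    obtain ⟨hy1, hy2⟩ := Submodule.mem_inf.mp hy
    obtain ⟨a, ha⟩ := hy1
    obtain ⟨d, hd⟩ := hy2
    have hy3 : e' y = y := by rw [← ha, ← Module.End.mul_apply, h3.eq]
    have hy4 : e'' y = y := by rw [← hd, ← Module.End.mul_apply, h4.eq]
    have hy5 : y = 0 := by
      calc y = e' (e'' y) := by rw [hy4, hy3]
        _ = (e' * e'') y := rfl
        _ = 0 := by rw [h5]; rfl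
    simp [hy5]
  have hfin1 : 1 ≤ Module.finrank F (LinearMap.range e') := by
    by_contra hcon
    push_neg at hcon
    have h11 : Module.finrank F (LinearMap.range e') = 0 := by omega
    rw [Submodule.finrank_eq_zero, LinearMap.range_eq_bot] at h11
    exact h1 h11
  have hfin2 : 1 ≤ Module.finrank F (LinearMap.range e'') := by
    by_contra hcon
    push_neg at hcon
    have h11 : Module.finrank F (LinearMap.range e'') = 0 := by omega
    rw [Submodule.finrank_eq_zero, LinearMap.range_eq_bot] at h11
    exact h2 h11
  have hsup_le : LinearMap.range e' ⊔ LinearMap.range e'' ≤ Submodule.span F {v} :=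
    sup_le (hr'.trans hrangei) (hr''.trans hrangei)
  have hle1 : Module.finrank F ↥(LinearMap.range e' ⊔ LinearMap.range e'') ≤ 1 := by
    calc Module.finrank F ↥(LinearMap.range e' ⊔ LinearMap.range e'')
        ≤ Module.finrank F ↥(Submodule.span F {v}) := Submodule.finrank_mono hsup_le
      _ = 1 := finrank_span_singleton hvne
  have hge2 : 2 ≤ Module.finrank F ↥(LinearMap.range e' ⊔ LinearMap.range e'') := by
    have h12 := Submodule.finrank_sup_add_finrank_inf_eq
      (LinearMap.range e') (LinearMap.range e'')
    rw [hdisj, finrank_bot, add_zero] at h12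
    omega
  omega
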